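/- Fix K, r ∈ ℕ. Let Ω be an open subset of the space of variables (z₁, z₂, w₀₀, w₁₀, w₀₁, W₀, …, W_{K+1}, ζ¹₀, …, ζ¹_r, ζ²₀, …, ζ²_r) on which W₀ ≠ 0. Define rational functions E_k by E₀ := W₁/W₀ and E_{k+1} := Σ_{j=0}^{k+1} W_{j+1}·∂E_k/∂W_j. Let f be a smooth function on Ω that does not depend on the variable W_{K+1}, and define D̂₂f := ∂f/∂z₂ + w₀₁·∂f/∂w₀₀ + (ζ¹₀ − ½W₀²)·∂f/∂w₁₀ + W₀·∂f/∂w₀₁ − Σ_{k=0}^{K} E_k·∂f/∂W_k. Then D̂₂f vanishes identically on Ω if and only if all the partial derivatives ∂f/∂z₂, ∂f/∂w₀₀, ∂f/∂w₁₀, ∂f/∂w₀₁, and ∂f/∂W_k for k = 0,…,K vanish identically on Ω, i.e. if and only if f depends only on z₁ and ζ¹₀,…,ζ¹_r, ζ²₀,…,ζ²_r. -/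

import Mathlib

open MvPolynomial Filter
set_option maxRecDepth 8000


/-- The coordinate space `(z₁, z₂, w₀₀, w₁₀, w₀₁, W₀, …, W_{K+1}, ζ¹₀, …, ζ¹_r, ζ²₀, …, ζ²_r)`. -/
abbrev Pt7 (K r : ℕ) : Type :=
  ℝ × ℝ × ℝ × ℝ × ℝ × (Fin (K + 2) → ℝ) × (Fin (r + 1) → ℝ) × (Fin (r + 1) → ℝ)

section
variable (K r : ℕ)

/-- Replace the coordinate `z₂` by `t`. -/
def updZ2 (p : Pt7 K r) (t : ℝ) : Pt7 K r := (p.1, t, p.2.2)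

/-- Replace the coordinate `w₀₀` by `t`. -/
def updW00 (p : Pt7 K r) (t : ℝ) : Pt7 K r := (p.1, p.2.1, t, p.2.2.2)

/-- Replace the coordinate `w₁₀` by `t`. -/
def updW10 (p : Pt7 K r) (t : ℝ) : Pt7 K r := (p.1, p.2.1, p.2.2.1, t, p.2.2.2.2)

/-- Replace the coordinate `w₀₁` by `t`. -/
def updW01 (p : Pt7 K r) (t : ℝ) : Pt7 K r :=
  (p.1, p.2.1, p.2.2.1, p.2.2.2.1, t, p.2.2.2.2.2)

/-- Replace the coordinate `W_j` by `t`. -/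
def updW (p : Pt7 K r) (j : Fin (K + 2)) (t : ℝ) : Pt7 K r :=
  (p.1, p.2.1, p.2.2.1, p.2.2.2.1, p.2.2.2.2.1,
    Function.update p.2.2.2.2.2.1 j t, p.2.2.2.2.2.2)

/-- Partial derivative with respect to `z₂`. -/
noncomputable def pdz2 (f : Pt7 K r → ℝ) (p : Pt7 K r) : ℝ :=
  deriv (fun t => f (updZ2 K r p t)) p.2.1

/-- Partial derivative with respect to `w₀₀`. -/
noncomputable def pdw00 (f : Pt7 K r → ℝ) (p : Pt7 K r) : ℝ :=
  deriv (fun t => f (updW00 K r p t)) p.2.2.1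

/-- Partial derivative with respect to `w₁₀`. -/
noncomputable def pdw10 (f : Pt7 K r → ℝ) (p : Pt7 K r) : ℝ :=
  deriv (fun t => f (updW10 K r p t)) p.2.2.2.1

/-- Partial derivative with respect to `w₀₁`. -/
noncomputable def pdw01 (f : Pt7 K r → ℝ) (p : Pt7 K r) : ℝ :=
  deriv (fun t => f (updW01 K r p t)) p.2.2.2.2.1

/-- Partial derivative with respect to `W_j`. -/
noncomputable def pdW (j : Fin (K + 2)) (f : Pt7 K r → ℝ) (p : Pt7 K r) : ℝ :=
  deriv (fun t => f (updW K r p j t)) (p.2.2.2.2.2.1 j)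

/-- Extend a finite tuple `W₀, …, W_{K+1}` by zero to a sequence indexed by `ℕ`. -/
def extW (W : Fin (K + 2) → ℝ) : ℕ → ℝ :=
  fun j => if h : j < K + 2 then W ⟨j, h⟩ else 0

end

/-- The rational functions `E_k`: `E₀ = W₁/W₀`,
`E_{k+1} = Σ_{j=0}^{k+1} W_{j+1}·∂E_k/∂W_j`. -/
noncomputable def Efun : ℕ → (ℕ → ℝ) → ℝ
  | 0 => fun W => W 1 / W 0
  | k + 1 => fun W => ∑ j ∈ Finset.range (k + 2),
      W (j + 1) * deriv (fun t => Efun k (Function.update W j t)) (W j)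

/-- The restricted total derivative operator `D̂₂` in the chosen coordinates:
`D̂₂f = f_{z₂} + w₀₁ f_{w₀₀} + (ζ¹₀ − ½W₀²) f_{w₁₀} + W₀ f_{w₀₁} − Σ_{k=0}^{K} E_k f_{W_k}`. -/
noncomputable def D2hat (K r : ℕ) (f : Pt7 K r → ℝ) (p : Pt7 K r) : ℝ :=
  pdz2 K r f p + p.2.2.2.2.1 * pdw00 K r f p
    + (p.2.2.2.2.2.2.1 0 - (1 / 2) * (p.2.2.2.2.2.1 0) ^ 2) * pdw10 K r f p
    + p.2.2.2.2.2.1 0 * pdw01 K r f p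
    - ∑ k : Fin (K + 1), Efun k.1 (extW K p.2.2.2.2.2.1) * pdW K r k.castSucc f p


open MvPolynomial Filter
set_option maxRecDepth 8000

/-- Polynomial numerators of the rational functions `E_k`. -/
noncomputable def Ppoly : ℕ → MvPolynomial ℕ ℝ
  | 0 => X 1
  | k + 1 => X 0 * (∑ j ∈ Finset.range (k + 2), X (j + 1) * pderiv j (Ppoly k))
      - C ((k : ℝ) + 1) * (X 1 * Ppoly k)

lemma pderiv_comm' (P : MvPolynomial ℕ ℝ) (i j : ℕ) :
    pderiv i (pderiv j P) = pderiv j (pderiv i P) := by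
  induction P using MvPolynomial.induction_on with
  | C a => simp
  | add p q hp hq => simp [hp, hq]
  | mul_X p n hp =>
      simp only [pderiv_mul, pderiv_X, map_add, hp]
      have h1 : ∀ a b : ℕ, (pderiv a) ((Pi.single b 1 : ℕ → MvPolynomial ℕ ℝ) n) = 0 := by
        intro a b; rcases eq_or_ne n b with h | h <;> simp [Pi.single_apply, h]
      rw [h1, h1]; ring

lemma hasDerivAt_eval_update (Q : MvPolynomial ℕ ℝ) (W : ℕ → ℝ) (j : ℕ) (t : ℝ) :
    HasDerivAt (fun s => eval (Function.update W j s) Q)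
      (eval (Function.update W j t) (pderiv j Q)) t := by
  induction Q using MvPolynomial.induction_on with
  | C a => simpa using hasDerivAt_const t (a : ℝ)
  | add p q hp hq => simpa using hp.fun_add hq
  | mul_X p n hp =>
      have hX : ∀ s : ℝ, eval (Function.update W j s) (p * X n)
          = eval (Function.update W j s) p * (Function.update W j s n) := by
        intro s; simp
      by_cases hnj : n = j
      · subst hnj
        have : HasDerivAt (fun s : ℝ => eval (Function.update W n s) p * s)
            (eval (Function.update W n t) (pderiv n p) * t
              + eval (Function.update W n t) p * 1) t := hp.mul (hasDerivAt_id t)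
        refine HasDerivAt.congr_deriv (this.congr_of_eventuallyEq ?_) ?_
        · filter_upwards with s; simp
        · simp [pderiv_X]; ring
      · have : HasDerivAt (fun s : ℝ => eval (Function.update W j s) p * W n)
            (eval (Function.update W j t) (pderiv j p) * W n) t := hp.mul_const (W n)
        refine HasDerivAt.congr_deriv (this.congr_of_eventuallyEq ?_) ?_
        · filter_upwards with s
          simp [Function.update_of_ne hnj]
        · simp [pderiv_X, Pi.single_apply, hnj, Function.update_of_ne hnj]; ring

lemma single_poly (b n : ℕ) :
    (Pi.single b 1 : ℕ → MvPolynomial ℕ ℝ) n = if n = b then 1 else 0 :=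
  Pi.single_apply b 1 n

lemma Ppoly_pderiv_zero : ∀ k j, k + 2 ≤ j → pderiv j (Ppoly k) = 0 := by
  intro k
  induction k with
  | zero =>
      intro j hj
      rw [show Ppoly 0 = X 1 from rfl, pderiv_X, single_poly]
      simp [show ¬ (1 = j) by omega]
  | succ k ih =>
      intro j hj
      simp only [Ppoly, map_sub, pderiv_mul, pderiv_X, map_sum, single_poly]
      have hsum : ∀ i ∈ Finset.range (k + 2),
          (if i + 1 = j then (1:MvPolynomial ℕ ℝ) else 0) * (pderiv i) (Ppoly k) +
            X (i + 1) * (pderiv j) ((pderiv i) (Ppoly k)) = 0 := by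
        intro i hi
        simp only [Finset.mem_range] at hi
        rw [if_neg (by omega), pderiv_comm', ih j (by omega)]
        simp
      rw [Finset.sum_congr rfl hsum]
      simp [show ¬((0:ℕ) = j) by omega, show ¬((1:ℕ) = j) by omega, ih j (by omega)]

lemma Ppoly_pderiv_lead : ∀ k, pderiv (k + 1) (Ppoly k) = X 0 ^ k := by
  intro k
  induction k with
  | zero => simp [Ppoly, pderiv_X]
  | succ k ih =>
      simp only [Ppoly, map_sub, pderiv_mul, pderiv_X, map_sum, single_poly]
      have hsum : ∀ i ∈ Finset.range (k + 2),
          (if i + 1 = k + 1 + 1 then (1:MvPolynomial ℕ ℝ) else 0) * (pderiv i) (Ppoly k) +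
            X (i + 1) * (pderiv (k + 1 + 1)) ((pderiv i) (Ppoly k))
            = if i = k + 1 then (X 0 : MvPolynomial ℕ ℝ) ^ k else 0 := by
        intro i hi
        simp only [Finset.mem_range] at hi
        rw [pderiv_comm', Ppoly_pderiv_zero k (k+1+1) (by omega)]
        rcases eq_or_ne i (k+1) with h | h
        · subst h
          rw [if_pos rfl, if_pos rfl, ih]
          simp
        · rw [if_neg (by omega), if_neg h]
          simp
      rw [Finset.sum_congr rfl hsum, Finset.sum_ite_eq' (Finset.range (k+2)) (k+1)]
      simp [show ¬((0:ℕ) = k+1+1) by omega, show ¬((1:ℕ) = k+1+1) by omega,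
        Ppoly_pderiv_zero k (k+1+1) (by omega), pow_succ]
      ring

example : True := trivial

lemma Efun_eq : ∀ (k : ℕ) (W : ℕ → ℝ), W 0 ≠ 0 →
    Efun k W = eval W (Ppoly k) / (W 0) ^ (k + 1) := by
  intro k
  induction k with
  | zero => intro W hW; simp [Efun, Ppoly]
  | succ k ih =>
      intro W hW
      have hne : ∀ (j : ℕ), j ≠ 0 →
          deriv (fun t => Efun k (Function.update W j t)) (W j)
            = eval W (pderiv j (Ppoly k)) / (W 0) ^ (k + 1) := by
        intro j hj
        have h0 : ∀ t : ℝ, (Function.update W j t) 0 = W 0 := by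
          intro t; rw [Function.update_of_ne (Ne.symm hj)]
        have heq : (fun t => Efun k (Function.update W j t))
            = fun t => eval (Function.update W j t) (Ppoly k) / (W 0) ^ (k + 1) := by
          funext t
          rw [ih _ (by rw [h0]; exact hW), h0]
        rw [heq]
        have hd := (hasDerivAt_eval_update (Ppoly k) W j (W j)).div_const ((W 0) ^ (k+1))
        rw [Function.update_eq_self] at hd
        exact hd.deriv
      have h0 : deriv (fun t => Efun k (Function.update W 0 t)) (W 0)
          = (eval W (pderiv 0 (Ppoly k)) * (W 0) ^ (k+1)
              - eval W (Ppoly k) * (((k:ℝ)+1) * (W 0) ^ k)) / ((W 0) ^ (k+1)) ^ 2 := by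
        have hd1 := hasDerivAt_eval_update (Ppoly k) W 0 (W 0)
        rw [Function.update_eq_self] at hd1
        have hd2 : HasDerivAt (fun t : ℝ => t ^ (k+1)) (((k:ℝ)+1) * (W 0) ^ k) (W 0) := by
          simpa using hasDerivAt_pow (k+1) (W 0)
        have hd' := hd1.div hd2 (pow_ne_zero _ hW)
        rw [show Function.update W 0 (W 0) = W from Function.update_eq_self 0 W] at hd'
        have hd := hd'
        have hcong : (fun t => Efun k (Function.update W 0 t))
            =ᶠ[nhds (W 0)] fun t => eval (Function.update W 0 t) (Ppoly k) / t ^ (k+1) := by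
          filter_upwards [eventually_ne_nhds hW] with t ht
          rw [ih _ (by rw [Function.update_self]; exact ht), Function.update_self]
        exact ((hd.congr_of_eventuallyEq hcong).deriv)
      rw [show Efun (k+1) W = ∑ j ∈ Finset.range (k + 2),
          W (j + 1) * deriv (fun t => Efun k (Function.update W j t)) (W j) from rfl]
      rw [Finset.sum_range_succ']
      have hterm : ∀ j ∈ Finset.range (k+1),
          W (j + 1 + 1) * deriv (fun t => Efun k (Function.update W (j+1) t)) (W (j+1))
            = (W (j + 2) * eval W (pderiv (j+1) (Ppoly k))) / (W 0) ^ (k + 1) := by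
        intro j _
        rw [hne (j+1) (by omega)]; ring
      rw [Finset.sum_congr rfl hterm, h0, ← Finset.sum_div]
      have hevP : eval W (Ppoly (k+1))
          = W 0 * ((∑ j ∈ Finset.range (k+1),
                W (j + 2) * eval W (pderiv (j+1) (Ppoly k)))
              + W 1 * eval W (pderiv 0 (Ppoly k)))
            - ((k:ℝ)+1) * (W 1 * eval W (Ppoly k)) := by
        simp only [Ppoly, map_sub, eval_mul, eval_X, eval_C, map_sum]
        rw [Finset.sum_range_succ']
      rw [hevP]
      have hc : W 0 ^ (k+1) ≠ 0 := pow_ne_zero _ hW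
      field_simp
      ring

section StatementSeven
open Filter

variable {K r : ℕ}

/-- Unit coordinate directions in `Pt7`. -/
def ez2 (K r : ℕ) : Pt7 K r := (0, 1, 0, 0, 0, 0, 0, 0)
def ew00 (K r : ℕ) : Pt7 K r := (0, 0, 1, 0, 0, 0, 0, 0)
def ew10 (K r : ℕ) : Pt7 K r := (0, 0, 0, 1, 0, 0, 0, 0)
def ew01 (K r : ℕ) : Pt7 K r := (0, 0, 0, 0, 1, 0, 0, 0)
def eWd (K r : ℕ) (j : Fin (K + 2)) : Pt7 K r := (0, 0, 0, 0, 0, Pi.single j 1, 0, 0)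

lemma update_line {n : ℕ} (W : Fin n → ℝ) (j : Fin n) (t : ℝ) :
    Function.update W j t = W + (t - W j) • (Pi.single j 1 : Fin n → ℝ) := by
  funext i
  rcases eq_or_ne i j with h | h
  · subst h; simp
  · simp [Function.update_of_ne h, Pi.single_apply, h]

lemma updZ2_line (p : Pt7 K r) (t : ℝ) :
    updZ2 K r p t = p + (t - p.2.1) • ez2 K r := by
  simp [updZ2, ez2, Prod.ext_iff]

lemma updW00_line (p : Pt7 K r) (t : ℝ) :
    updW00 K r p t = p + (t - p.2.2.1) • ew00 K r := by
  simp [updW00, ew00, Prod.ext_iff]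

lemma updW10_line (p : Pt7 K r) (t : ℝ) :
    updW10 K r p t = p + (t - p.2.2.2.1) • ew10 K r := by
  simp [updW10, ew10, Prod.ext_iff]

lemma updW01_line (p : Pt7 K r) (t : ℝ) :
    updW01 K r p t = p + (t - p.2.2.2.2.1) • ew01 K r := by
  simp [updW01, ew01, Prod.ext_iff]

lemma updW_line (p : Pt7 K r) (j : Fin (K + 2)) (t : ℝ) :
    updW K r p j t = p + (t - p.2.2.2.2.2.1 j) • eWd K r j := by
  simp [updW, eWd, Prod.ext_iff, update_line]

lemma hasDerivAt_along (f : Pt7 K r → ℝ) (p u : Pt7 K r) (a : ℝ)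
    (hf : DifferentiableAt ℝ f p) :
    HasDerivAt (fun t => f (p + (t - a) • u)) (fderiv ℝ f p u) a := by
  have hline : HasDerivAt (fun t : ℝ => p + (t - a) • u) u a := by
    have h1 : HasDerivAt (fun t : ℝ => t - a) 1 a := (hasDerivAt_id a).sub_const a
    simpa using (h1.smul_const u).const_add p
  have hf' : HasFDerivAt f (fderiv ℝ f p) ((fun t : ℝ => p + (t - a) • u) a) := by
    simpa using hf.hasFDerivAt
  exact hf'.comp_hasDerivAt a hline

lemma hasDerivAt_along0 (f : Pt7 K r → ℝ) (p u : Pt7 K r)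
    (hf : DifferentiableAt ℝ f p) :
    HasDerivAt (fun t : ℝ => f (p + t • u)) (fderiv ℝ f p u) 0 := by
  simpa using hasDerivAt_along f p u (0:ℝ) hf

lemma pdz2_eq (f : Pt7 K r → ℝ) (p : Pt7 K r) (hf : DifferentiableAt ℝ f p) :
    pdz2 K r f p = fderiv ℝ f p (ez2 K r) := by
  have h := hasDerivAt_along f p (ez2 K r) p.2.1 hf
  have he : (fun t => f (updZ2 K r p t)) = fun t => f (p + (t - p.2.1) • ez2 K r) := by
    funext t; rw [updZ2_line]
  rw [pdz2, he]; exact h.deriv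

lemma pdw00_eq (f : Pt7 K r → ℝ) (p : Pt7 K r) (hf : DifferentiableAt ℝ f p) :
    pdw00 K r f p = fderiv ℝ f p (ew00 K r) := by
  have h := hasDerivAt_along f p (ew00 K r) p.2.2.1 hf
  have he : (fun t => f (updW00 K r p t)) = fun t => f (p + (t - p.2.2.1) • ew00 K r) := by
    funext t; rw [updW00_line]
  rw [pdw00, he]; exact h.deriv

lemma pdw10_eq (f : Pt7 K r → ℝ) (p : Pt7 K r) (hf : DifferentiableAt ℝ f p) :
    pdw10 K r f p = fderiv ℝ f p (ew10 K r) := by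
  have h := hasDerivAt_along f p (ew10 K r) p.2.2.2.1 hf
  have he : (fun t => f (updW10 K r p t)) = fun t => f (p + (t - p.2.2.2.1) • ew10 K r) := by
    funext t; rw [updW10_line]
  rw [pdw10, he]; exact h.deriv

lemma pdw01_eq (f : Pt7 K r → ℝ) (p : Pt7 K r) (hf : DifferentiableAt ℝ f p) :
    pdw01 K r f p = fderiv ℝ f p (ew01 K r) := by
  have h := hasDerivAt_along f p (ew01 K r) p.2.2.2.2.1 hf
  have he : (fun t => f (updW01 K r p t)) = fun t => f (p + (t - p.2.2.2.2.1) • ew01 K r) := by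
    funext t; rw [updW01_line]
  rw [pdw01, he]; exact h.deriv

lemma pdW_eq (f : Pt7 K r → ℝ) (p : Pt7 K r) (j : Fin (K + 2))
    (hf : DifferentiableAt ℝ f p) :
    pdW K r j f p = fderiv ℝ f p (eWd K r j) := by
  have h := hasDerivAt_along f p (eWd K r j) (p.2.2.2.2.2.1 j) hf
  have he : (fun t => f (updW K r p j t))
      = fun t => f (p + (t - p.2.2.2.2.2.1 j) • eWd K r j) := by
    funext t; rw [updW_line]
  rw [pdW, he]; exact h.deriv

end StatementSeven


section Machinery
open Filter

variable {K r : ℕ} {Ω : Set (Pt7 K r)} {f : Pt7 K r → ℝ}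

lemma fdiff_at (hΩ : IsOpen Ω) (hf : ContDiffOn ℝ (⊤ : ℕ∞) f Ω)
    {p : Pt7 K r} (hp : p ∈ Ω) : DifferentiableAt ℝ f p :=
  (hf.differentiableOn (by simp)).differentiableAt (hΩ.mem_nhds hp)

lemma fderiv_contDiffOn (hΩ : IsOpen Ω) (hf : ContDiffOn ℝ (⊤ : ℕ∞) f Ω) :
    ContDiffOn ℝ (⊤ : ℕ∞) (fderiv ℝ f) Ω := by
  refine hf.fderiv_of_isOpen hΩ ?_
  exact_mod_cast le_top

lemma Fdiff_at (hΩ : IsOpen Ω) (hf : ContDiffOn ℝ (⊤ : ℕ∞) f Ω)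
    {p : Pt7 K r} (hp : p ∈ Ω) (v : Pt7 K r) :
    DifferentiableAt ℝ (fun q => fderiv ℝ f q v) p :=
  DifferentiableAt.clm_apply
    (((fderiv_contDiffOn hΩ hf).differentiableOn (by simp)).differentiableAt (hΩ.mem_nhds hp))
    (differentiableAt_const v)

lemma mixed_zero (hΩ : IsOpen Ω) (hf : ContDiffOn ℝ (⊤ : ℕ∞) f Ω)
    {p : Pt7 K r} (hp : p ∈ Ω) (u v : Pt7 K r)
    (hu : ∀ q ∈ Ω, fderiv ℝ f q u = 0) :
    fderiv ℝ (fun q => fderiv ℝ f q v) p u = 0 := by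
  have hdf : DifferentiableAt ℝ (fderiv ℝ f) p :=
    ((fderiv_contDiffOn hΩ hf).differentiableOn (by simp)).differentiableAt (hΩ.mem_nhds hp)
  have hclm : ∀ w x' : Pt7 K r, fderiv ℝ (fun q => fderiv ℝ f q w) p x'
      = fderiv ℝ (fderiv ℝ f) p x' w := by
    intro w x'
    rw [fderiv_clm_apply hdf (differentiableAt_const w)]
    simp
  have hsym := second_derivative_symmetric_of_eventually
    (f := f) (f' := fderiv ℝ f) (f'' := fderiv ℝ (fderiv ℝ f) p) (x := p)
    (by filter_upwards [hΩ.mem_nhds hp] with q hq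
        exact (fdiff_at hΩ hf hq).hasFDerivAt)
    hdf.hasFDerivAt
  have h0 : fderiv ℝ (fun q => fderiv ℝ f q u) p = 0 := by
    have he : (fun q => fderiv ℝ f q u) =ᶠ[nhds p] fun _ => (0 : ℝ) := by
      filter_upwards [hΩ.mem_nhds hp] with q hq
      exact hu q hq
    rw [he.fderiv_eq]
    exact fderiv_const_apply 0
  rw [hclm v, hsym u v, ← hclm u v, h0]
  rfl

/-- The key differentiation lemma: differentiate a vanishing combination
`∑ cᵢ ∂f/∂eᵢ = 0` along a direction `u` in which all first derivatives of `f` vanish. -/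
lemma keylem (hΩ : IsOpen Ω) (hf : ContDiffOn ℝ (⊤ : ℕ∞) f Ω)
    {ι : Type} [Fintype ι] (c : ι → Pt7 K r → ℝ) (e : ι → Pt7 K r) (d : ι → ℝ)
    (p u : Pt7 K r) (hp : p ∈ Ω)
    (hG : ∀ q ∈ Ω, ∑ i, c i q * fderiv ℝ f q (e i) = 0)
    (hc : ∀ i, HasDerivAt (fun t : ℝ => c i (p + t • u)) (d i) (0 : ℝ))
    (hu : ∀ q ∈ Ω, fderiv ℝ f q u = 0) :
    ∑ i, d i * fderiv ℝ f p (e i) = 0 := by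
  classical
  have hline : Continuous (fun t : ℝ => p + t • u) :=
    continuous_const.add (continuous_id.smul continuous_const)
  have hmem : ∀ᶠ t in nhds (0 : ℝ), p + t • u ∈ Ω := by
    have : (fun t : ℝ => p + t • u) ⁻¹' Ω ∈ nhds (0 : ℝ) := by
      refine (hΩ.preimage hline).mem_nhds ?_
      simp [hp]
    exact this
  have hg0 : (fun t : ℝ => ∑ i, c i (p + t • u) * fderiv ℝ f (p + t • u) (e i))
      =ᶠ[nhds (0 : ℝ)] fun _ => (0 : ℝ) := by
    filter_upwards [hmem] with t ht
    exact hG _ ht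
  have hD : HasDerivAt (fun t : ℝ => ∑ i, c i (p + t • u) * fderiv ℝ f (p + t • u) (e i))
      (∑ i, (d i * fderiv ℝ f p (e i)
        + c i p * fderiv ℝ (fun q => fderiv ℝ f q (e i)) p u)) 0 := by
    refine HasDerivAt.fun_sum fun i _ => ?_
    have h2 : HasDerivAt (fun t : ℝ => fderiv ℝ f (p + t • u) (e i))
        (fderiv ℝ (fun q => fderiv ℝ f q (e i)) p u) 0 :=
      hasDerivAt_along0 _ p u (Fdiff_at hΩ hf hp (e i))
    have := (hc i).fun_mul h2
    simpa using this
  have h3 : HasDerivAt (fun t : ℝ => ∑ i, c i (p + t • u) * fderiv ℝ f (p + t • u) (e i))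
      (0 : ℝ) 0 := (hasDerivAt_const (0:ℝ) (0:ℝ)).congr_of_eventuallyEq hg0
  have hder0 := (h3.unique hD).symm
  rw [← hder0]
  congr 1
  funext i
  rw [mixed_zero hΩ hf hp u (e i) hu]
  ring

end Machinery


section Family
open Filter

variable {K r : ℕ}

lemma extW_apply (K : ℕ) (W : Fin (K + 2) → ℝ) (j : Fin (K + 2)) :
    extW K W (j : ℕ) = W j := by
  simp [extW]

lemma extW_zero (K : ℕ) (W : Fin (K + 2) → ℝ) : extW K W 0 = W 0 := by
  simpa using extW_apply K W 0

lemma extW_line (K : ℕ) (W : Fin (K + 2) → ℝ) (j : Fin (K + 2)) (t : ℝ) :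
    extW K (W + t • (Pi.single j 1 : Fin (K + 2) → ℝ))
      = Function.update (extW K W) (j : ℕ) (W j + t) := by
  funext n
  rcases eq_or_ne n (j : ℕ) with h | h
  · subst h
    rw [Function.update_self, extW_apply]
    simp
  · rw [Function.update_of_ne h]
    dsimp [extW]
    split_ifs with hn
    · have hne : (⟨n, hn⟩ : Fin (K + 2)) ≠ j := by simpa [Fin.ext_iff] using h
      simp [Pi.single_apply, hne]
    · rfl

/-- Coefficient functions of the operator `D̂₂` written via `Ppoly`. -/
noncomputable def cG (K r : ℕ) : Fin 4 ⊕ Fin (K + 1) → Pt7 K r → ℝ :=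
  Sum.elim
    ![fun _ => 1,
      fun q => q.2.2.2.2.1,
      fun q => q.2.2.2.2.2.2.1 0 - (1 / 2) * (q.2.2.2.2.2.1 0) ^ 2,
      fun q => q.2.2.2.2.2.1 0]
    (fun k q => -(MvPolynomial.eval (extW K q.2.2.2.2.2.1) (Ppoly (k : ℕ))
      / (q.2.2.2.2.2.1 0) ^ ((k : ℕ) + 1)))

/-- Directions paired with the coefficients. -/
def eG (K r : ℕ) : Fin 4 ⊕ Fin (K + 1) → Pt7 K r :=
  Sum.elim ![ez2 K r, ew00 K r, ew10 K r, ew01 K r] (fun k => eWd K r k.castSucc)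

lemma Gsum (K r : ℕ) (f : Pt7 K r → ℝ) (q : Pt7 K r)
    (hq0 : q.2.2.2.2.2.1 0 ≠ 0) (hdq : DifferentiableAt ℝ f q) :
    ∑ i, cG K r i q * fderiv ℝ f q (eG K r i) = D2hat K r f q := by
  rw [Fintype.sum_sum_type, Fin.sum_univ_four, D2hat]
  have hsum : ∀ k ∈ (Finset.univ : Finset (Fin (K + 1))),
      Efun (k : ℕ) (extW K q.2.2.2.2.2.1) * pdW K r k.castSucc f q
        = -(cG K r (Sum.inr k) q * fderiv ℝ f q (eG K r (Sum.inr k))) := by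
    intro k _
    rw [pdW_eq _ _ _ hdq]
    simp only [cG, eG, Sum.elim_inr]
    rw [Efun_eq _ _ (by rw [extW_zero]; exact hq0), extW_zero]
    ring
  rw [Finset.sum_congr rfl hsum]
  rw [pdz2_eq _ _ hdq, pdw00_eq _ _ hdq, pdw10_eq _ _ hdq, pdw01_eq _ _ hdq]
  simp only [cG, eG, Sum.elim_inl, Matrix.cons_val_zero, Matrix.cons_val_one, Matrix.head_cons,
    Matrix.cons_val_two, Matrix.tail_cons, Matrix.cons_val_three, Matrix.head_fin_const]
  rw [Finset.sum_neg_distrib]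
  ring

lemma hasDerivAt_coefE (K : ℕ) (k : ℕ) (W : Fin (K + 2) → ℝ)
    (j : Fin (K + 2)) (hj : (j : ℕ) ≠ 0) :
    HasDerivAt (fun t : ℝ =>
        -(MvPolynomial.eval (extW K (W + t • (Pi.single j 1 : Fin (K + 2) → ℝ))) (Ppoly k)
          / ((W + t • (Pi.single j 1 : Fin (K + 2) → ℝ)) 0) ^ (k + 1)))
      (-(MvPolynomial.eval (extW K W) (MvPolynomial.pderiv (j : ℕ) (Ppoly k))
          / (W 0) ^ (k + 1))) (0 : ℝ) := by
  have hsingle0 : (Pi.single j (1:ℝ) : Fin (K + 2) → ℝ) 0 = 0 := by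
    rw [Pi.single_apply, if_neg]
    intro h
    exact hj (by subst h; simp)
  have hden : ∀ t : ℝ, (W + t • (Pi.single j 1 : Fin (K + 2) → ℝ)) 0 = W 0 := by
    intro t; simp [hsingle0]
  have hinner : HasDerivAt (fun t : ℝ => W j + t) 1 (0:ℝ) :=
    (hasDerivAt_id (0:ℝ)).const_add (W j)
  have houter := hasDerivAt_eval_update (Ppoly k) (extW K W) (j : ℕ) (W j)
  rw [show Function.update (extW K W) (j : ℕ) (W j) = extW K W by
      rw [← extW_apply K W j]; exact Function.update_eq_self _ _] at houter
  have houter' : HasDerivAt (fun s => MvPolynomial.eval (Function.update (extW K W) (j:ℕ) s) (Ppoly k))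
      (MvPolynomial.eval (extW K W) (MvPolynomial.pderiv (j : ℕ) (Ppoly k)))
      ((fun t : ℝ => W j + t) 0) := by simpa using houter
  have hcomp := houter'.comp (0:ℝ) hinner
  have hcomp' : HasDerivAt
      (fun t : ℝ => MvPolynomial.eval (Function.update (extW K W) (j:ℕ) (W j + t)) (Ppoly k))
      (MvPolynomial.eval (extW K W) (MvPolynomial.pderiv (j : ℕ) (Ppoly k))) (0:ℝ) := by
    rw [mul_one] at hcomp; exact hcomp
  have hfinal := (hcomp'.div_const ((W 0) ^ (k + 1))).neg
  refine hfinal.congr_of_eventuallyEq ?_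
  filter_upwards with t
  rw [extW_line, hden]
  rfl

lemma hasDerivAt_coefE0 (K : ℕ) (k : ℕ) (W : Fin (K + 2) → ℝ) (hW : W 0 ≠ 0) :
    ∃ d : ℝ, HasDerivAt (fun t : ℝ =>
        -(MvPolynomial.eval (extW K (W + t • (Pi.single (0 : Fin (K+2)) 1 : Fin (K + 2) → ℝ))) (Ppoly k)
          / ((W + t • (Pi.single (0 : Fin (K+2)) 1 : Fin (K + 2) → ℝ)) 0) ^ (k + 1))) d (0 : ℝ) := by
  have hden : ∀ t : ℝ, (W + t • (Pi.single (0 : Fin (K+2)) 1 : Fin (K + 2) → ℝ)) 0 = W 0 + t := by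
    intro t; simp
  have hinner : HasDerivAt (fun t : ℝ => W 0 + t) 1 (0:ℝ) :=
    (hasDerivAt_id (0:ℝ)).const_add (W 0)
  have houter := hasDerivAt_eval_update (Ppoly k) (extW K W) ((0 : Fin (K+2)) : ℕ) (W 0)
  rw [show Function.update (extW K W) ((0 : Fin (K+2)) : ℕ) (W 0) = extW K W by
      rw [show W 0 = W (0 : Fin (K+2)) from rfl, ← extW_apply K W 0]
      exact Function.update_eq_self _ _] at houter
  have houter' : HasDerivAt
      (fun s => MvPolynomial.eval (Function.update (extW K W) ((0 : Fin (K+2)) : ℕ) s) (Ppoly k))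
      (MvPolynomial.eval (extW K W) (MvPolynomial.pderiv ((0 : Fin (K+2)) : ℕ) (Ppoly k)))
      ((fun t : ℝ => W 0 + t) 0) := by simpa using houter
  have hcomp := houter'.comp (0:ℝ) hinner
  have hcomp' : HasDerivAt
      (fun t : ℝ => MvPolynomial.eval (Function.update (extW K W) ((0 : Fin (K+2)) : ℕ) (W 0 + t)) (Ppoly k))
      (MvPolynomial.eval (extW K W) (MvPolynomial.pderiv ((0 : Fin (K+2)) : ℕ) (Ppoly k))) (0:ℝ) := by
    rw [mul_one] at hcomp; exact hcomp
  have hdenD : HasDerivAt (fun t : ℝ => (W 0 + t) ^ (k + 1))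
      ((((k:ℝ)+1)) * (W 0 + 0) ^ k * 1) (0:ℝ) := by
    simpa using hinner.fun_pow (k+1)
  have hne : (W 0 + (0:ℝ)) ^ (k + 1) ≠ 0 := by simpa using pow_ne_zero (k+1) hW
  have hdiv := (hcomp'.div hdenD hne).neg
  refine ⟨_, hdiv.congr_of_eventuallyEq ?_⟩
  filter_upwards with t
  rw [extW_line, hden]
  rfl

end Family

/-- (Classification of `z₂`-integrals of the reduced equation, coordinate
form.)  A smooth function `f` on `Ω ⊆ {W₀ ≠ 0}` that does not depend on `W_{K+1}` satisfies
`D̂₂f = 0` on `Ω` if and only if all the partial derivatives of `f` with respect to `z₂`,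
`w₀₀`, `w₁₀`, `w₀₁` and `W₀, …, W_K` vanish identically on `Ω`, i.e. iff `f` depends only
on `z₁` and `ζ¹₀, …, ζ¹_r, ζ²₀, …, ζ²_r`. -/
theorem statement7 (K r : ℕ) (Ω : Set (Pt7 K r)) (hΩ : IsOpen Ω)
    (hΩ0 : ∀ p ∈ Ω, p.2.2.2.2.2.1 0 ≠ 0)
    (f : Pt7 K r → ℝ) (hf : ContDiffOn ℝ (⊤ : ℕ∞) f Ω)
    (hind : ∀ (p : Pt7 K r) (t : ℝ), f (updW K r p (Fin.last (K + 1)) t) = f p) :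
    (∀ p ∈ Ω, D2hat K r f p = 0) ↔
      ∀ p ∈ Ω, pdz2 K r f p = 0 ∧ pdw00 K r f p = 0 ∧ pdw10 K r f p = 0 ∧
        pdw01 K r f p = 0 ∧ ∀ k : Fin (K + 1), pdW K r k.castSucc f p = 0 := by
  constructor
  · intro hD2 p hp
    have hdiff : ∀ q ∈ Ω, DifferentiableAt ℝ f q := fun q hq => fdiff_at hΩ hf hq
    have hG : ∀ q ∈ Ω, ∑ i, cG K r i q * fderiv ℝ f q (eG K r i) = 0 := by
      intro q hq
      rw [Gsum K r f q (hΩ0 q hq) (hdiff q hq)]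
      exact hD2 q hq
    have hlast : ∀ q ∈ Ω, fderiv ℝ f q (eWd K r (Fin.last (K + 1))) = 0 := by
      intro q hq
      have h1 : HasDerivAt (fun t => f (updW K r q (Fin.last (K + 1)) t))
          (fderiv ℝ f q (eWd K r (Fin.last (K + 1)))) (q.2.2.2.2.2.1 (Fin.last (K + 1))) := by
        refine (hasDerivAt_along f q (eWd K r (Fin.last (K + 1)))
          (q.2.2.2.2.2.1 (Fin.last (K + 1))) (hdiff q hq)).congr_of_eventuallyEq ?_
        filter_upwards with t
        rw [updW_line]
      rw [show (fun t => f (updW K r q (Fin.last (K + 1)) t)) = fun _ => f q from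
        funext fun t => hind q t] at h1
      exact h1.unique (hasDerivAt_const _ _)
    have hWall : ∀ n : ℕ, ∀ q ∈ Ω, ∀ j : Fin (K + 2), K + 1 - n ≤ (j : ℕ) →
        fderiv ℝ f q (eWd K r j) = 0 := by
      intro n
      induction n with
      | zero =>
          intro q hq j hj
          have hjl : j = Fin.last (K + 1) := by
            apply Fin.ext
            simp only [Fin.val_last]
            omega
          rw [hjl]
          exact hlast q hq
      | succ n ih =>
          intro q hq j hj
          by_cases hcase : K + 1 - n ≤ (j : ℕ)
          · exact ih q hq j hcase
          · have hjlt : (j : ℕ) + 1 < K + 2 := by omega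
            have hjK : (j : ℕ) < K + 1 := by omega
            have hj0 : ((⟨(j : ℕ) + 1, hjlt⟩ : Fin (K + 2)) : ℕ) ≠ 0 := by simp
            have hu : ∀ q' ∈ Ω, fderiv ℝ f q' (eWd K r ⟨(j : ℕ) + 1, hjlt⟩) = 0 := by
              intro q' hq'
              exact ih q' hq' ⟨(j : ℕ) + 1, hjlt⟩ (by simp; omega)
            have hWcomp : ∀ t : ℝ, (q + t • eWd K r ⟨(j : ℕ) + 1, hjlt⟩).2.2.2.2.2.1
                = q.2.2.2.2.2.1 + t • (Pi.single (⟨(j : ℕ) + 1, hjlt⟩ : Fin (K + 2)) 1 :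
                    Fin (K + 2) → ℝ) := by
              intro t
              simp [eWd]
            have hW0comp : ∀ t : ℝ, (q + t • eWd K r ⟨(j : ℕ) + 1, hjlt⟩).2.2.2.2.2.1 0
                = q.2.2.2.2.2.1 0 := by
              intro t
              rw [hWcomp t]
              have : (Pi.single (⟨(j : ℕ) + 1, hjlt⟩ : Fin (K + 2)) 1 : Fin (K + 2) → ℝ) 0 = 0 := by
                rw [Pi.single_apply, if_neg]
                intro h; have := congrArg Fin.val h; simp only [Fin.val_zero] at this; omega
              simp [this]
            set d : Fin 4 ⊕ Fin (K + 1) → ℝ := Sum.elim (fun _ => 0)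
              (fun k => -(MvPolynomial.eval (extW K q.2.2.2.2.2.1)
                  (MvPolynomial.pderiv ((j : ℕ) + 1) (Ppoly (k : ℕ)))
                / (q.2.2.2.2.2.1 0) ^ ((k : ℕ) + 1))) with hd_def
            have hc : ∀ i, HasDerivAt
                (fun t : ℝ => cG K r i (q + t • eWd K r ⟨(j : ℕ) + 1, hjlt⟩)) (d i) (0 : ℝ) := by
              intro i
              rcases i with i4 | kk
              · fin_cases i4
                · show HasDerivAt (fun t : ℝ =>
                      cG K r (Sum.inl 0) (q + t • eWd K r ⟨(j : ℕ) + 1, hjlt⟩)) (0 : ℝ) (0 : ℝ)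
                  exact hasDerivAt_const _ _
                · show HasDerivAt (fun t : ℝ =>
                      cG K r (Sum.inl 1) (q + t • eWd K r ⟨(j : ℕ) + 1, hjlt⟩)) (0 : ℝ) (0 : ℝ)
                  have he : (fun t : ℝ => cG K r (Sum.inl 1) (q + t • eWd K r ⟨(j : ℕ) + 1, hjlt⟩))
                      = fun _ => q.2.2.2.2.1 := by
                    funext t
                    simp [cG, eWd]
                  rw [he]
                  exact hasDerivAt_const _ _
                · show HasDerivAt (fun t : ℝ =>
                      cG K r (Sum.inl 2) (q + t • eWd K r ⟨(j : ℕ) + 1, hjlt⟩)) (0 : ℝ) (0 : ℝ)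
                  have he : (fun t : ℝ => cG K r (Sum.inl 2) (q + t • eWd K r ⟨(j : ℕ) + 1, hjlt⟩))
                      = fun _ => q.2.2.2.2.2.2.1 0 - (1 / 2) * (q.2.2.2.2.2.1 0) ^ 2 := by
                    funext t
                    simp only [cG, Sum.elim_inl, Matrix.cons_val_two, Matrix.tail_cons,
                      Matrix.head_cons, hW0comp t]
                    congr 1
                    simp [eWd]
                  rw [he]
                  exact hasDerivAt_const _ _
                · show HasDerivAt (fun t : ℝ =>
                      cG K r (Sum.inl 3) (q + t • eWd K r ⟨(j : ℕ) + 1, hjlt⟩)) (0 : ℝ) (0 : ℝ)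
                  have he : (fun t : ℝ => cG K r (Sum.inl 3) (q + t • eWd K r ⟨(j : ℕ) + 1, hjlt⟩))
                      = fun _ => q.2.2.2.2.2.1 0 := by
                    funext t
                    simp only [cG, Sum.elim_inl, Matrix.cons_val_three, Matrix.tail_cons,
                      Matrix.head_cons, Matrix.head_fin_const]
                    exact hW0comp t
                  rw [he]
                  exact hasDerivAt_const _ _
              · have hbase := hasDerivAt_coefE K (kk : ℕ) q.2.2.2.2.2.1 ⟨(j : ℕ) + 1, hjlt⟩ hj0
                refine HasDerivAt.congr_deriv (hbase.congr_of_eventuallyEq ?_)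
                  (by simp [hd_def])
                filter_upwards with t
                simp only [cG, Sum.elim_inr, hWcomp t]
            have hkey := keylem hΩ hf (cG K r) (eG K r) d q (eWd K r ⟨(j : ℕ) + 1, hjlt⟩)
              hq hG hc hu
            rw [Fintype.sum_sum_type, Fin.sum_univ_four] at hkey
            have hinl : ∀ i4 : Fin 4, d (Sum.inl i4) = 0 := fun _ => rfl
            rw [hinl 0, hinl 1, hinl 2, hinl 3] at hkey
            have hsingle : ∑ kk : Fin (K + 1), d (Sum.inr kk) * fderiv ℝ f q (eG K r (Sum.inr kk))
                = d (Sum.inr ⟨(j : ℕ), hjK⟩) * fderiv ℝ f q (eG K r (Sum.inr ⟨(j : ℕ), hjK⟩)) := by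
              refine Finset.sum_eq_single_of_mem _ (Finset.mem_univ _) ?_
              intro b _ hbne
              rcases lt_or_gt_of_ne (fun h : (b : ℕ) = (j : ℕ) => hbne (by
                apply Fin.ext; exact h)) with hbj | hbj
              · have hz : MvPolynomial.pderiv ((j : ℕ) + 1) (Ppoly (b : ℕ)) = 0 :=
                  Ppoly_pderiv_zero _ _ (by omega)
                simp [hd_def, hz]
              · have hF : fderiv ℝ f q (eG K r (Sum.inr b)) = 0 := by
                  simp only [eG, Sum.elim_inr]
                  exact ih q hq b.castSucc (by simp [Fin.coe_castSucc]; omega)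
                rw [hF, mul_zero]
            rw [hsingle] at hkey
            have h0 := hΩ0 q hq
            have hdval : d (Sum.inr ⟨(j : ℕ), hjK⟩) = -(q.2.2.2.2.2.1 0)⁻¹ := by
              simp only [hd_def, Sum.elim_inr]
              rw [Ppoly_pderiv_lead]
              rw [show MvPolynomial.eval (extW K q.2.2.2.2.2.1) (MvPolynomial.X 0 ^ (j:ℕ))
                  = (q.2.2.2.2.2.1 0) ^ (j : ℕ) by
                rw [map_pow, MvPolynomial.eval_X, extW_zero]]
              rw [pow_succ]
              field_simp
            have hEq : eG K r (Sum.inr ⟨(j : ℕ), hjK⟩) = eWd K r j := by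
              simp only [eG, Sum.elim_inr]
              exact congrArg (eWd K r) (Fin.ext (by simp))
            rw [hdval, hEq] at hkey
            have : (q.2.2.2.2.2.1 0)⁻¹ * fderiv ℝ f q (eWd K r j) = 0 := by linarith
            rcases mul_eq_zero.mp this with h | h
            · exact absurd h (inv_ne_zero h0)
            · exact h
    have hWfull : ∀ q ∈ Ω, ∀ j : Fin (K + 2), fderiv ℝ f q (eWd K r j) = 0 := by
      intro q hq j
      exact hWall (K + 1) q hq j (by omega)
    -- Step 2: the relation -W₀ f_{w10} + f_{w01} = 0 on Ω
    have hW0comp0 : ∀ (q : Pt7 K r) (t : ℝ),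
        (q + t • eWd K r 0).2.2.2.2.2.1 = q.2.2.2.2.2.1 + t • (Pi.single (0 : Fin (K+2)) 1 :
          Fin (K + 2) → ℝ) := by
      intro q t
      simp [eWd]
    have hrel : ∀ q ∈ Ω, -(q.2.2.2.2.2.1 0) * fderiv ℝ f q (ew10 K r)
        + fderiv ℝ f q (ew01 K r) = 0 := by
      intro q hq
      set d : Fin 4 ⊕ Fin (K + 1) → ℝ := Sum.elim ![0, 0, -(q.2.2.2.2.2.1 0), 1]
        (fun kk => Classical.choose (hasDerivAt_coefE0 K (kk : ℕ) q.2.2.2.2.2.1 (hΩ0 q hq)))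
        with hd_def
      have hc : ∀ i, HasDerivAt
          (fun t : ℝ => cG K r i (q + t • eWd K r 0)) (d i) (0 : ℝ) := by
        intro i
        rcases i with i4 | kk
        · fin_cases i4
          · show HasDerivAt (fun t : ℝ => cG K r (Sum.inl 0) (q + t • eWd K r 0))
              (d (Sum.inl 0)) (0 : ℝ)
            exact hasDerivAt_const _ _
          · show HasDerivAt (fun t : ℝ => cG K r (Sum.inl 1) (q + t • eWd K r 0))
              (d (Sum.inl 1)) (0 : ℝ)
            have he : (fun t : ℝ => cG K r (Sum.inl 1) (q + t • eWd K r 0))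
                = fun _ => q.2.2.2.2.1 := by
              funext t
              simp [cG, eWd]
            rw [he]
            exact hasDerivAt_const _ _
          · show HasDerivAt (fun t : ℝ => cG K r (Sum.inl 2) (q + t • eWd K r 0))
              (d (Sum.inl 2)) (0 : ℝ)
            have he : (fun t : ℝ => cG K r (Sum.inl 2) (q + t • eWd K r 0))
                = fun t => q.2.2.2.2.2.2.1 0 - (1 / 2) * (q.2.2.2.2.2.1 0 + t) ^ 2 := by
              funext t
              simp only [cG, Sum.elim_inl, Matrix.cons_val_two, Matrix.tail_cons,
                Matrix.head_cons, hW0comp0 q t]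
              congr 2
              · simp [eWd]
              · simp
            rw [he]
            have h1 : HasDerivAt (fun t : ℝ => q.2.2.2.2.2.1 0 + t) 1 (0:ℝ) :=
              (hasDerivAt_id (0:ℝ)).const_add _
            have h2 := ((h1.pow 2).const_mul (1/2 : ℝ)).const_sub (q.2.2.2.2.2.2.1 0)
            refine HasDerivAt.congr_deriv h2 (by simp [hd_def]; try ring)
          · show HasDerivAt (fun t : ℝ => cG K r (Sum.inl 3) (q + t • eWd K r 0))
              (d (Sum.inl 3)) (0 : ℝ)
            have he : (fun t : ℝ => cG K r (Sum.inl 3) (q + t • eWd K r 0))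
                = fun t => q.2.2.2.2.2.1 0 + t := by
              funext t
              simp only [cG, Sum.elim_inl, Matrix.cons_val_three, Matrix.tail_cons,
                Matrix.head_cons, Matrix.head_fin_const, hW0comp0 q t]
              simp
            rw [he]
            refine HasDerivAt.congr_deriv ((hasDerivAt_id (0:ℝ)).const_add _)
              (by simp [hd_def])
        · have hbase := Classical.choose_spec (hasDerivAt_coefE0 K (kk : ℕ) q.2.2.2.2.2.1 (hΩ0 q hq))
          refine HasDerivAt.congr_deriv (hbase.congr_of_eventuallyEq ?_)
            (by simp [hd_def])
          filter_upwards with t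
          simp only [cG, Sum.elim_inr, hW0comp0 q t]
      have hkey := keylem hΩ hf (cG K r) (eG K r) d q (eWd K r 0) hq hG hc
        (fun q' hq' => hWfull q' hq' 0)
      rw [Fintype.sum_sum_type, Fin.sum_univ_four] at hkey
      have hz : ∀ kk : Fin (K + 1), d (Sum.inr kk) * fderiv ℝ f q (eG K r (Sum.inr kk)) = 0 := by
        intro kk
        rw [show eG K r (Sum.inr kk) = eWd K r kk.castSucc from rfl, hWfull q hq _, mul_zero]
      rw [Finset.sum_congr rfl (fun kk _ => hz kk)] at hkey
      simp only [hd_def, Sum.elim_inl, Matrix.cons_val_zero, Matrix.cons_val_one,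
        Matrix.head_cons, Matrix.cons_val_two, Matrix.tail_cons, Matrix.cons_val_three,
        Matrix.head_fin_const, eG, Finset.sum_const_zero] at hkey
      calc -(q.2.2.2.2.2.1 0) * fderiv ℝ f q (ew10 K r) + fderiv ℝ f q (ew01 K r)
          = 0 * fderiv ℝ f q (ez2 K r) + 0 * fderiv ℝ f q (ew00 K r)
            + -(q.2.2.2.2.2.1 0) * fderiv ℝ f q (ew10 K r)
            + 1 * fderiv ℝ f q (ew01 K r) + 0 := by ring
        _ = 0 := hkey
    -- Step 3: f_{w10} = 0 on Ω
    have hFw10 : ∀ q ∈ Ω, fderiv ℝ f q (ew10 K r) = 0 := by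
      intro q hq
      have hG2 : ∀ q' ∈ Ω, ∑ i : Fin 2,
          (![fun q'' : Pt7 K r => -(q''.2.2.2.2.2.1 0), fun _ => 1] i) q'
            * fderiv ℝ f q' ((![ew10 K r, ew01 K r]) i) = 0 := by
        intro q' hq'
        rw [Fin.sum_univ_two]
        simpa using hrel q' hq'
      have hc : ∀ i : Fin 2, HasDerivAt (fun t : ℝ =>
          (![fun q'' : Pt7 K r => -(q''.2.2.2.2.2.1 0), fun _ => 1] i) (q + t • eWd K r 0))
          ((![(-1 : ℝ), 0]) i) (0 : ℝ) := by
        intro i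
        fin_cases i
        · show HasDerivAt (fun t : ℝ =>
            (![fun q'' : Pt7 K r => -(q''.2.2.2.2.2.1 0), fun _ => 1] 0) (q + t • eWd K r 0))
            ((![(-1 : ℝ), 0]) 0) (0 : ℝ)
          have he : (fun t : ℝ => -((q + t • eWd K r 0).2.2.2.2.2.1 0))
              = fun t => -(q.2.2.2.2.2.1 0 + t) := by
            funext t
            rw [hW0comp0 q t]
            simp
          show HasDerivAt (fun t : ℝ => -((q + t • eWd K r 0).2.2.2.2.2.1 0)) (-1 : ℝ) 0
          rw [he]
          exact ((hasDerivAt_id (0:ℝ)).const_add _).neg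
        · show HasDerivAt (fun t : ℝ =>
            (![fun q'' : Pt7 K r => -(q''.2.2.2.2.2.1 0), fun _ => 1] 1) (q + t • eWd K r 0))
            ((![(-1 : ℝ), 0]) 1) (0 : ℝ)
          simp only [Matrix.cons_val_one, Matrix.head_cons]
          exact hasDerivAt_const _ _
      have hkey := keylem hΩ hf _ _ _ q (eWd K r 0) hq hG2 hc
        (fun q' hq' => hWfull q' hq' 0)
      rw [Fin.sum_univ_two] at hkey
      simp only [Matrix.cons_val_zero, Matrix.cons_val_one, Matrix.head_cons] at hkey
      linarith
    have hFw01 : ∀ q ∈ Ω, fderiv ℝ f q (ew01 K r) = 0 := by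
      intro q hq
      have := hrel q hq
      rw [hFw10 q hq] at this
      linarith
    -- Step 4: the relation f_{z2} + w01 f_{w00} = 0 on Ω, then f_{w00} = 0
    have hrel2 : ∀ q ∈ Ω, fderiv ℝ f q (ez2 K r)
        + q.2.2.2.2.1 * fderiv ℝ f q (ew00 K r) = 0 := by
      intro q hq
      have hkey := hG q hq
      rw [Fintype.sum_sum_type, Fin.sum_univ_four] at hkey
      have hz : ∀ kk : Fin (K + 1), cG K r (Sum.inr kk) q * fderiv ℝ f q (eG K r (Sum.inr kk)) = 0 := by
        intro kk
        rw [show eG K r (Sum.inr kk) = eWd K r kk.castSucc from rfl, hWfull q hq _, mul_zero]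
      rw [Finset.sum_congr rfl (fun kk _ => hz kk), Finset.sum_const_zero] at hkey
      simp only [cG, eG, Sum.elim_inl, Matrix.cons_val_zero, Matrix.cons_val_one,
        Matrix.head_cons, Matrix.cons_val_two, Matrix.tail_cons, Matrix.cons_val_three,
        Matrix.head_fin_const] at hkey
      rw [hFw10 q hq, hFw01 q hq] at hkey
      calc fderiv ℝ f q (ez2 K r) + q.2.2.2.2.1 * fderiv ℝ f q (ew00 K r)
          = 1 * fderiv ℝ f q (ez2 K r) + q.2.2.2.2.1 * fderiv ℝ f q (ew00 K r)
            + (q.2.2.2.2.2.2.1 0 - 1 / 2 * q.2.2.2.2.2.1 0 ^ 2) * 0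
            + q.2.2.2.2.2.1 0 * 0 + 0 := by ring
        _ = 0 := hkey
    have hFw00 : ∀ q ∈ Ω, fderiv ℝ f q (ew00 K r) = 0 := by
      intro q hq
      have hG3 : ∀ q' ∈ Ω, ∑ i : Fin 2,
          (![fun _ : Pt7 K r => (1:ℝ), fun q'' : Pt7 K r => q''.2.2.2.2.1] i) q'
            * fderiv ℝ f q' ((![ez2 K r, ew00 K r]) i) = 0 := by
        intro q' hq'
        rw [Fin.sum_univ_two]
        simpa using hrel2 q' hq'
      have hc : ∀ i : Fin 2, HasDerivAt (fun t : ℝ =>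
          (![fun _ : Pt7 K r => (1:ℝ), fun q'' : Pt7 K r => q''.2.2.2.2.1] i) (q + t • ew01 K r))
          ((![(0 : ℝ), 1]) i) (0 : ℝ) := by
        intro i
        fin_cases i
        · show HasDerivAt (fun t : ℝ =>
            (![fun _ : Pt7 K r => (1:ℝ), fun q'' : Pt7 K r => q''.2.2.2.2.1] 0) (q + t • ew01 K r))
            ((![(0 : ℝ), 1]) 0) (0 : ℝ)
          simp only [Matrix.cons_val_zero]
          exact hasDerivAt_const _ _
        · show HasDerivAt (fun t : ℝ =>
            (![fun _ : Pt7 K r => (1:ℝ), fun q'' : Pt7 K r => q''.2.2.2.2.1] 1) (q + t • ew01 K r))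
            ((![(0 : ℝ), 1]) 1) (0 : ℝ)
          simp only [Matrix.cons_val_one, Matrix.head_cons]
          have he : (fun t : ℝ => (q + t • ew01 K r).2.2.2.2.1)
              = fun t => q.2.2.2.2.1 + t := by
            funext t
            simp [ew01]
          show HasDerivAt (fun t : ℝ => (q + t • ew01 K r).2.2.2.2.1) (1 : ℝ) 0
          rw [he]
          exact (hasDerivAt_id (0:ℝ)).const_add _
      have hkey := keylem hΩ hf _ _ _ q (ew01 K r) hq hG3 hc hFw01
      rw [Fin.sum_univ_two] at hkey
      simp only [Matrix.cons_val_zero, Matrix.cons_val_one, Matrix.head_cons] at hkey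
      linarith
    have hFz2 : ∀ q ∈ Ω, fderiv ℝ f q (ez2 K r) = 0 := by
      intro q hq
      have := hrel2 q hq
      rw [hFw00 q hq] at this
      linarith
    have hdp := hdiff p hp
    refine ⟨?_, ?_, ?_, ?_, ?_⟩
    · rw [pdz2_eq _ _ hdp]; exact hFz2 p hp
    · rw [pdw00_eq _ _ hdp]; exact hFw00 p hp
    · rw [pdw10_eq _ _ hdp]; exact hFw10 p hp
    · rw [pdw01_eq _ _ hdp]; exact hFw01 p hp
    · intro k
      rw [pdW_eq _ _ _ hdp]
      exact hWfull p hp k.castSucc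
  · intro h p hp
    obtain ⟨h1, h2, h3, h4, h5⟩ := h p hp
    rw [D2hat, h1, h2, h3, h4]
    have : ∀ k ∈ (Finset.univ : Finset (Fin (K+1))),
        Efun (k : ℕ) (extW K p.2.2.2.2.2.1) * pdW K r k.castSucc f p = 0 := by
      intro k _
      rw [h5 k, mul_zero]
    rw [Finset.sum_congr rfl this, Finset.sum_const_zero]
    ring
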